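/- (Erdős–Gallai) Every graph with n vertices and more than (k−1)n/2 edges contains a path with k edges. -/

import Mathlib

open SimpleGraph Walk Finset List

section ErdosGallaiHelpers

variable {V : Type*} {G : SimpleGraph V}

lemma eg_prefix_path {u v : V} (p : G.Walk u v) (hp : p.IsPath) :
    ∀ j, j ≤ p.length → ∃ (a b : V) (q : G.Walk a b), q.IsPath ∧ q.length = j := by
  induction p with
  | nil => intro j hj; simp at hj; exact ⟨u, u, Walk.nil, Walk.IsPath.nil, by simp [hj]⟩
  | cons h q ih =>
    intro j hj
    rcases Nat.lt_or_ge j (q.length + 1) with h' | h'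
    · exact ih ((Walk.cons_isPath_iff _ _).1 hp).1 j (by omega)
    · exact ⟨_, _, Walk.cons h q, hp, by simp at hj ⊢; omega⟩

lemma eg_split (p : G.Walk u v) :
    ∀ i, i < p.length → ∃ (q : G.Walk u (p.getVert i)) (r : G.Walk (p.getVert (i+1)) v),
      q.length = i ∧ r.length + i + 1 = p.length ∧ q.support ++ r.support = p.support := by
  induction p with
  | nil => intro i hi; simp at hi
  | cons h q ih =>
    intro i hi
    match i with
    | 0 =>
      refine ⟨Walk.nil, q.copy (Walk.getVert_zero q).symm rfl, rfl, by simp, by simp; rfl⟩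
    | (i+1) =>
      obtain ⟨q₁, r₁, hl1, hl2, hs⟩ := ih i (by simpa using hi)
      exact ⟨Walk.cons h q₁, r₁, by simp [hl1], by simp; omega, by simp [← hs]⟩

lemma eg_extend {u v : V} (p : G.Walk u v) (hp : p.IsPath) {i : ℕ} (hi : i < p.length)
    (hA : G.Adj u (p.getVert (i+1))) (hB : G.Adj v (p.getVert i))
    {w x : V} (hx : x ∈ p.support) (hw : w ∉ p.support) (hwx : G.Adj w x) :
    ∃ (a b : V) (q : G.Walk a b), q.IsPath ∧ q.length = p.length + 1 := by
  classical
  obtain ⟨q, r, hql, hrl, hqr⟩ := eg_split p i hi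
  set c : G.Walk u u := Walk.cons hA (r.append (Walk.cons hB q.reverse)) with hc
  have hctail : c.support.tail = r.support ++ q.support.reverse := by
    simp [hc, Walk.support_append, Walk.support_cons, Walk.support_reverse]
  have hperm : c.support.tail.Perm p.support := by
    rw [hctail, ← hqr]
    calc r.support ++ q.support.reverse
        ~ r.support ++ q.support := (q.support.reverse_perm).append_left _
      _ ~ q.support ++ r.support := List.perm_append_comm
  have hclen : c.length = p.length + 1 := by
    simp [hc, Walk.length_append, Walk.length_cons, Walk.length_reverse]
    omega
  have hxc : x ∈ c.support := by
    have : x ∈ c.support.tail := hperm.mem_iff.2 hx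
    exact List.mem_of_mem_tail this
  set c' : G.Walk x x := c.rotate x hxc with hc'
  have hc'len : c'.length = c.length := by
    have h1 := congrArg Walk.length (Walk.take_spec c hxc)
    rw [Walk.length_append] at h1
    simp only [hc', Walk.rotate, Walk.length_append]
    omega
  have hc'nil : ¬ c'.Nil := by
    rw [Walk.nil_iff_length_eq]
    omega
  have hperm' : c'.support.tail.Perm p.support :=
    ((Walk.support_rotate c x hxc).perm).trans hperm
  have htail_supp : c'.tail.support = c'.support.tail := Walk.support_tail_of_not_nil c' hc'nil
  have htpath : c'.tail.IsPath := by
    rw [Walk.isPath_def, htail_supp]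
    exact hperm'.nodup_iff.2 ((Walk.isPath_def p).1 hp)
  have htlen : c'.tail.length + 1 = c'.length := Walk.length_tail_add_one hc'nil
  refine ⟨w, _, Walk.cons hwx c'.tail.reverse, ?_, ?_⟩
  · rw [Walk.cons_isPath_iff]
    refine ⟨htpath.reverse, ?_⟩
    rw [Walk.support_reverse, List.mem_reverse, htail_supp]
    exact fun hmem => hw (hperm'.mem_iff.1 hmem)
  · simp [Walk.length_reverse]
    omega

lemma eg_max_path [Fintype V] (G : SimpleGraph V) (hne : ∃ x y, G.Adj x y) :
    ∃ (u v : V) (p : G.Walk u v), p.IsPath ∧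
      ∀ (a b : V) (q : G.Walk a b), q.IsPath → q.length ≤ p.length := by
  classical
  obtain ⟨x, y, hxy⟩ := hne
  set F : Finset ℕ := (Finset.range (Fintype.card V)).filter
    (fun l => ∃ (a b : V) (q : G.Walk a b), q.IsPath ∧ q.length = l) with hF
  have hmem : ∀ (a b : V) (q : G.Walk a b), q.IsPath → q.length ∈ F := by
    intro a b q hq
    rw [hF, Finset.mem_filter, Finset.mem_range]
    exact ⟨hq.length_lt, a, b, q, hq, rfl⟩
  have hFne : F.Nonempty := ⟨0, hmem x x Walk.nil Walk.IsPath.nil⟩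
  obtain ⟨a, b, q, hq, hql⟩ := (Finset.mem_filter.1 (F.max'_mem hFne)).2
  exact ⟨a, b, q, hq, fun a' b' q' hq' => hql ▸ F.le_max' _ (hmem a' b' q' hq')⟩

lemma eg_pigeonhole [Fintype V] (G : SimpleGraph V) [DecidableRel G.Adj] {u v : V}
    (p : G.Walk u v) (hp : p.IsPath) (hl : 1 ≤ p.length)
    (hu : ∀ y, G.Adj u y → y ∈ p.support) (hv : ∀ y, G.Adj v y → y ∈ p.support)
    (hdeg : p.length + 1 ≤ G.degree u + G.degree v) :
    ∃ i, i < p.length ∧ G.Adj u (p.getVert (i+1)) ∧ G.Adj v (p.getVert i) := by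
  classical
  set f : V → ℕ := fun y =>
    if h : y ∈ p.support then Nat.find (Walk.mem_support_iff_exists_getVert.mp h) else 0
    with hfdef
  have hfnd : ∀ y, (h : y ∈ p.support) → p.getVert (f y) = y ∧ f y ≤ p.length := by
    intro y h
    simp only [hfdef, dif_pos h]
    exact Nat.find_spec (Walk.mem_support_iff_exists_getVert.mp h)
  set A : Finset ℕ := (Finset.range p.length).filter (fun i => G.Adj u (p.getVert (i+1)))
    with hA
  set B : Finset ℕ := (Finset.range p.length).filter (fun i => G.Adj v (p.getVert i))
    with hB
  have hcardA : G.degree u ≤ A.card := by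
    apply Finset.card_le_card_of_injOn (fun y => f y - 1)
    · intro y hy
      rw [Finset.mem_coe, SimpleGraph.mem_neighborFinset] at hy
      have hys := hu y hy
      obtain ⟨h1, h2⟩ := hfnd y hys
      have hne : f y ≠ 0 := by
        intro h0
        rw [h0, Walk.getVert_zero] at h1
        exact (G.ne_of_adj hy) h1
      rw [hA, Finset.mem_coe, Finset.mem_filter, Finset.mem_range]
      beta_reduce
      constructor
      · omega
      · have : f y - 1 + 1 = f y := by omega
        rw [this, h1]; exact hy
    · intro y1 hy1 y2 hy2 heq
      simp only [Finset.mem_coe, SimpleGraph.mem_neighborFinset] at hy1 hy2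
      have hs1 := hu y1 hy1
      have hs2 := hu y2 hy2
      obtain ⟨g1, g2⟩ := hfnd y1 hs1
      obtain ⟨g3, g4⟩ := hfnd y2 hs2
      have hne1 : f y1 ≠ 0 := by
        intro h0; rw [h0, Walk.getVert_zero] at g1; exact (G.ne_of_adj hy1) g1
      have hne2 : f y2 ≠ 0 := by
        intro h0; rw [h0, Walk.getVert_zero] at g3; exact (G.ne_of_adj hy2) g3
      have heq' : f y1 - 1 = f y2 - 1 := heq
      have : f y1 = f y2 := by omega
      rw [← g1, ← g3, this]
  have hcardB : G.degree v ≤ B.card := by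
    apply Finset.card_le_card_of_injOn f
    · intro y hy
      rw [Finset.mem_coe, SimpleGraph.mem_neighborFinset] at hy
      have hys := hv y hy
      obtain ⟨h1, h2⟩ := hfnd y hys
      have hne : f y ≠ p.length := by
        intro h0
        rw [h0, Walk.getVert_length] at h1
        exact (G.ne_of_adj hy) h1
      rw [hB, Finset.mem_coe, Finset.mem_filter, Finset.mem_range]
      exact ⟨by omega, by rw [h1]; exact hy⟩
    · intro y1 hy1 y2 hy2 heq
      simp only [Finset.mem_coe, SimpleGraph.mem_neighborFinset] at hy1 hy2
      obtain ⟨g1, _⟩ := hfnd y1 (hv y1 hy1)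
      obtain ⟨g3, _⟩ := hfnd y2 (hv y2 hy2)
      rw [← g1, ← g3, heq]
  have hunion : (A ∪ B).card ≤ p.length := by
    apply le_trans (Finset.card_le_card (Finset.union_subset
      (Finset.filter_subset _ _) (Finset.filter_subset _ _)))
    simp
  have hinter : (A ∩ B).Nonempty := by
    rw [← Finset.card_pos]
    have := Finset.card_inter_add_card_union A B
    omega
  obtain ⟨i, hi⟩ := hinter
  rw [Finset.mem_inter, hA, hB, Finset.mem_filter, Finset.mem_filter, Finset.mem_range] at hi
  exact ⟨i, hi.1.1, hi.1.2, hi.2.2⟩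

lemma eg_main (k : ℕ) (hk : 1 ≤ k) :
    ∀ (N : ℕ) {V : Type u} [Fintype V] (G : SimpleGraph V) [DecidableRel G.Adj],
      G.edgeFinset.card ≤ N →
      (k - 1) * ((Finset.univ : Finset V).filter (fun a => ∃ w, G.Adj a w)).card
        < 2 * G.edgeFinset.card →
      ∃ (u v : V) (p : G.Walk u v), p.IsPath ∧ p.length = k := by
  intro N
  induction N using Nat.strong_induction_on with
  | _ N IH =>
  intro V _ G _ hle hE
  classical
  have he1 : 1 ≤ G.edgeFinset.card := by
    by_contra h
    have : G.edgeFinset.card = 0 := by omega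
    rw [this] at hE
    omega
  have hedge : ∃ x y, G.Adj x y := by
    obtain ⟨e, he⟩ := Finset.card_pos.mp (show 0 < G.edgeFinset.card by omega)
    rw [SimpleGraph.mem_edgeFinset] at he
    have : ∃ x y, s(x, y) ∈ G.edgeSet := by
      rw [← Sym2.exists]; exact ⟨e, he⟩
    simpa [SimpleGraph.mem_edgeSet] using this
  obtain ⟨u, v, p, hp, hmax⟩ := eg_max_path G hedge
  have hl1 : 1 ≤ p.length := by
    obtain ⟨x, y, hxy⟩ := hedge
    have hpath : (Walk.cons hxy Walk.nil).IsPath := by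
      rw [Walk.cons_isPath_iff]
      exact ⟨Walk.IsPath.nil, by simp [hxy.ne]⟩
    have := hmax _ _ _ hpath
    simpa using this
  by_cases hkl : k ≤ p.length
  · exact eg_prefix_path p hp k hkl
  push_neg at hkl
  by_cases hlow : ∃ a, (∃ w, G.Adj a w) ∧ 2 * G.degree a + 1 ≤ k
  · -- low-degree vertex: delete its incident edges
    obtain ⟨a, ⟨w0, haw⟩, hdeg⟩ := hlow
    set G' := G.deleteEdges (G.incidenceSet a) with hG'
    haveI : DecidableRel G'.Adj := Classical.decRel _
    have hG'sub : G'.edgeFinset = G.edgeFinset \ G.incidenceFinset a := by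
      ext e
      simp [SimpleGraph.edgeSet_deleteEdges, SimpleGraph.mem_edgeFinset,
        SimpleGraph.mem_incidenceFinset, hG']
    have hsub2 : G.incidenceFinset a ⊆ G.edgeFinset := by
      intro e he
      rw [SimpleGraph.mem_incidenceFinset] at he
      exact SimpleGraph.mem_edgeFinset.2 (G.incidenceSet_subset a he)
    have hcard' : G'.edgeFinset.card + G.degree a = G.edgeFinset.card := by
      rw [hG'sub, ← G.card_incidenceFinset_eq_degree a]
      exact Finset.card_sdiff_add_card_eq_card hsub2
    have hsupp : ((Finset.univ : Finset V).filter (fun b => ∃ w, G'.Adj b w)) ⊆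
        ((Finset.univ : Finset V).filter (fun b => ∃ w, G.Adj b w)).erase a := by
      intro b hb
      rw [Finset.mem_filter] at hb
      obtain ⟨-, w', hbw'⟩ := hb
      rw [hG', SimpleGraph.deleteEdges_adj] at hbw'
      rw [Finset.mem_erase, Finset.mem_filter]
      refine ⟨?_, Finset.mem_univ _, w', hbw'.1⟩
      rintro rfl
      exact hbw'.2 (G.mk'_mem_incidenceSet_left_iff.2 hbw'.1)
    have ha_supp : a ∈ (Finset.univ : Finset V).filter (fun b => ∃ w, G.Adj b w) := by
      rw [Finset.mem_filter]; exact ⟨Finset.mem_univ _, w0, haw⟩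
    have hscard : ((Finset.univ : Finset V).filter (fun b => ∃ w, G'.Adj b w)).card + 1 ≤
        ((Finset.univ : Finset V).filter (fun b => ∃ w, G.Adj b w)).card := by
      have h1 := Finset.card_le_card hsupp
      rw [Finset.card_erase_of_mem ha_supp] at h1
      have h2 : 1 ≤ ((Finset.univ : Finset V).filter (fun b => ∃ w, G.Adj b w)).card :=
        Finset.card_pos.2 ⟨a, ha_supp⟩
      omega
    set s' := ((Finset.univ : Finset V).filter (fun b => ∃ w, G'.Adj b w)).card with hs'
    set s := ((Finset.univ : Finset V).filter (fun b => ∃ w, G.Adj b w)).card with hs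
    have harith : (k - 1) * s' < 2 * G'.edgeFinset.card := by
      have h2 : (k - 1) * s' + (k - 1) * 1 ≤ (k - 1) * s := by
        rw [← Nat.mul_add]
        exact Nat.mul_le_mul_left _ hscard
      have h3 : (k - 1) * s' + 2 * G.degree a < 2 * G.edgeFinset.card := by
        apply lt_of_le_of_lt _ hE
        apply le_trans (Nat.add_le_add_left (by omega : 2 * G.degree a ≤ (k-1) * 1) _)
        exact h2
      have heq : 2 * G'.edgeFinset.card + 2 * G.degree a = 2 * G.edgeFinset.card := by omega
      rw [← heq] at h3
      exact Nat.lt_of_add_lt_add_right h3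
    have hdega : 1 ≤ G.degree a := by
      have : 0 < G.degree a := (G.degree_pos_iff_exists_adj a).2 ⟨w0, haw⟩
      omega
    obtain ⟨u', v', q, hq, hql⟩ := IH G'.edgeFinset.card (by omega) G' le_rfl harith
    refine ⟨u', v', q.map (SimpleGraph.Hom.ofLE (G.deleteEdges_le _)), ?_, ?_⟩
    · exact Walk.map_isPath_of_injective
        (by rw [SimpleGraph.Hom.coe_ofLE]; exact Function.injective_id) hq
    · rw [Walk.length_map]; exact hql
  · -- all support vertices have high degree
    push_neg at hlow
    have hu_adj : G.Adj u (p.getVert 1) := by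
      have := p.adj_getVert_succ (show 0 < p.length by omega)
      simpa using this
    have hv_adj : G.Adj v (p.reverse.getVert 1) := by
      have := p.reverse.adj_getVert_succ (show 0 < p.reverse.length by
        rw [Walk.length_reverse]; omega)
      simpa using this
    have hdegu : k ≤ 2 * G.degree u := by
      have := hlow u ⟨_, hu_adj⟩; omega
    have hdegv : k ≤ 2 * G.degree v := by
      have := hlow v ⟨_, hv_adj⟩; omega
    have hnbru : ∀ y, G.Adj u y → y ∈ p.support := by
      intro y hy
      by_contra hys
      have hpath : (Walk.cons hy.symm p).IsPath := (Walk.cons_isPath_iff _ _).2 ⟨hp, hys⟩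
      have := hmax _ _ _ hpath
      simp at this
    have hnbrv : ∀ y, G.Adj v y → y ∈ p.support := by
      intro y hy
      by_contra hys
      have hpath : (Walk.cons hy.symm p.reverse).IsPath := by
        rw [Walk.cons_isPath_iff]
        refine ⟨hp.reverse, ?_⟩
        rw [Walk.support_reverse, List.mem_reverse]
        exact hys
      have := hmax _ _ _ hpath
      simp [Walk.length_reverse] at this
    have hdegsum : p.length + 1 ≤ G.degree u + G.degree v := by omega
    obtain ⟨i, hil, hAi, hBi⟩ := eg_pigeonhole G p hp hl1 hnbru hnbrv hdegsum
    have hclosure : ∀ y x, x ∈ p.support → G.Adj y x → y ∈ p.support := by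
      intro y x hx hyx
      by_contra hys
      obtain ⟨a, b, q, hq, hql⟩ := eg_extend p hp hil hAi hBi hx hys hyx
      have := hmax a b q hq
      omega
    set S : Finset V := p.support.toFinset with hS
    have hScard : S.card = p.length + 1 := by
      rw [hS, List.toFinset_card_of_nodup ((Walk.isPath_def p).1 hp), Walk.length_support]
    have hSsub : S ⊆ (Finset.univ : Finset V).filter (fun b => ∃ w, G.Adj b w) := by
      intro x hx
      rw [hS, List.mem_toFinset] at hx
      rw [Finset.mem_filter]
      refine ⟨Finset.mem_univ _, ?_⟩
      obtain ⟨n, hn, hnl⟩ := Walk.mem_support_iff_exists_getVert.1 hx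
      rcases Nat.lt_or_ge n p.length with h' | h'
      · exact ⟨p.getVert (n+1), hn ▸ p.adj_getVert_succ h'⟩
      · have : n = p.length := by omega
        have hxv : x = v := by rw [← hn, this, Walk.getVert_length]
        exact ⟨p.getVert i, hxv ▸ hBi⟩
    set G' := G.deleteEdges {e : Sym2 V | ∃ x ∈ e, x ∈ p.support} with hG'
    haveI : DecidableRel G'.Adj := Classical.decRel _
    set D : Finset (Sym2 V) := G.edgeFinset.filter (fun e => ∃ x ∈ e, x ∈ p.support) with hD
    have hG'sub : G'.edgeFinset = G.edgeFinset \ D := by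
      ext e
      simp [SimpleGraph.edgeSet_deleteEdges, SimpleGraph.mem_edgeFinset, hG', hD]
      tauto
    have hcard' : G'.edgeFinset.card + D.card = G.edgeFinset.card := by
      rw [hG'sub]
      exact Finset.card_sdiff_add_card_eq_card (Finset.filter_subset _ _)
    have hD1 : 1 ≤ D.card := by
      apply Finset.card_pos.2
      refine ⟨s(u, p.getVert 1), ?_⟩
      rw [hD, Finset.mem_filter, SimpleGraph.mem_edgeFinset, SimpleGraph.mem_edgeSet]
      exact ⟨hu_adj, u, Sym2.mem_mk_left _ _, p.start_mem_support⟩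
    have hDS : D ⊆ S.sym2 := by
      intro e he
      rw [hD, Finset.mem_filter] at he
      obtain ⟨hee, x, hxe, hxs⟩ := he
      rw [SimpleGraph.mem_edgeFinset] at hee
      revert hee hxe
      refine Sym2.ind (fun a b => ?_) e
      intro hee hxe
      have hadj : G.Adj a b := (G.mem_edgeSet).1 hee
      rcases Sym2.mem_iff.1 hxe with rfl | rfl
      · have hb : b ∈ p.support := hclosure b x hxs hadj.symm
        rw [Finset.mk_mem_sym2_iff, hS]
        exact ⟨List.mem_toFinset.2 hxs, List.mem_toFinset.2 hb⟩
      · have ha : a ∈ p.support := hclosure a x hxs hadj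
        rw [Finset.mk_mem_sym2_iff, hS]
        exact ⟨List.mem_toFinset.2 ha, List.mem_toFinset.2 hxs⟩
    have hdiag_sub : S.image Sym2.diag ⊆ S.sym2 := by
      intro e he
      rw [Finset.mem_image] at he
      obtain ⟨x, hx, rfl⟩ := he
      rw [Sym2.diag, Finset.mk_mem_sym2_iff]
      exact ⟨hx, hx⟩
    have hdisj : Disjoint D (S.image Sym2.diag) := by
      rw [Finset.disjoint_left]
      intro e he he'
      rw [hD, Finset.mem_filter, SimpleGraph.mem_edgeFinset] at he
      rw [Finset.mem_image] at he'
      obtain ⟨x, _, rfl⟩ := he'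
      exact G.not_isDiag_of_mem_edgeSet he.1 (Sym2.diag_isDiag x)
    have hcount : D.card + S.card ≤ S.sym2.card := by
      rw [← Finset.card_image_of_injective S Sym2.diag_injective,
        ← Finset.card_union_of_disjoint hdisj]
      exact Finset.card_le_card (Finset.union_subset hDS hdiag_sub)
    have h2d : 2 * D.card ≤ (p.length + 1) * p.length := by
      rw [Finset.card_sym2, hScard, Nat.choose_two_right] at hcount
      have e1 : p.length + 1 + 1 - 1 = p.length + 1 := by omega
      rw [e1] at hcount
      have hqq : (p.length + 1 + 1) * (p.length + 1) =
          (p.length + 1) * p.length + 2 * (p.length + 1) := by ring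
      omega
    have hsupp' : ((Finset.univ : Finset V).filter (fun b => ∃ w, G'.Adj b w)) ⊆
        ((Finset.univ : Finset V).filter (fun b => ∃ w, G.Adj b w)) \ S := by
      intro b hb
      rw [Finset.mem_filter] at hb
      obtain ⟨-, w', hbw'⟩ := hb
      rw [hG', SimpleGraph.deleteEdges_adj] at hbw'
      rw [Finset.mem_sdiff, Finset.mem_filter]
      refine ⟨⟨Finset.mem_univ _, w', hbw'.1⟩, ?_⟩
      intro hbS
      rw [hS, List.mem_toFinset] at hbS
      exact hbw'.2 ⟨b, Sym2.mem_mk_left _ _, hbS⟩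
    set s' := ((Finset.univ : Finset V).filter (fun b => ∃ w, G'.Adj b w)).card with hs'
    set s := ((Finset.univ : Finset V).filter (fun b => ∃ w, G.Adj b w)).card with hs
    have hls : p.length + 1 ≤ s := hScard ▸ Finset.card_le_card hSsub
    have hscard : s' + (p.length + 1) ≤ s := by
      have h1 := Finset.card_le_card hsupp'
      rw [Finset.card_sdiff_of_subset hSsub, hScard] at h1
      omega
    have harith : (k - 1) * s' < 2 * G'.edgeFinset.card := by
      have h2 : (k - 1) * s' + (k - 1) * (p.length + 1) ≤ (k - 1) * s := by
        rw [← Nat.mul_add]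
        exact Nat.mul_le_mul_left _ hscard
      have h2d' : 2 * D.card ≤ (k - 1) * (p.length + 1) := by
        calc 2 * D.card ≤ (p.length + 1) * p.length := h2d
          _ ≤ (p.length + 1) * (k - 1) := Nat.mul_le_mul_left _ (by omega)
          _ = (k - 1) * (p.length + 1) := Nat.mul_comm _ _
      have h3 : (k - 1) * s' + 2 * D.card < 2 * G.edgeFinset.card := by
        apply lt_of_le_of_lt _ hE
        exact le_trans (Nat.add_le_add_left h2d' _) h2
      have heq : 2 * G'.edgeFinset.card + 2 * D.card = 2 * G.edgeFinset.card := by omega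
      rw [← heq] at h3
      exact Nat.lt_of_add_lt_add_right h3
    obtain ⟨u', v', q, hq, hql⟩ := IH G'.edgeFinset.card (by omega) G' le_rfl harith
    refine ⟨u', v', q.map (SimpleGraph.Hom.ofLE (G.deleteEdges_le _)), ?_, ?_⟩
    · exact Walk.map_isPath_of_injective
        (by rw [SimpleGraph.Hom.coe_ofLE]; exact Function.injective_id) hq
    · rw [Walk.length_map]; exact hql

end ErdosGallaiHelpers

/-- Erdős–Gallai: every graph on `n` vertices with more than `(k-1)n/2` edges
contains a path with `k` edges. -/
theorem erdos_gallai_path {V : Type*} [Fintype V] (G : SimpleGraph V)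
    [DecidableRel G.Adj] (k : ℕ) (hk : 1 ≤ k)
    (hE : (k - 1) * Fintype.card V < 2 * G.edgeFinset.card) :
    ∃ (u v : V) (p : G.Walk u v), p.IsPath ∧ p.length = k := by
  apply eg_main k hk G.edgeFinset.card G le_rfl
  calc (k - 1) * ((Finset.univ : Finset V).filter (fun a => ∃ w, G.Adj a w)).card
      ≤ (k - 1) * Fintype.card V := by
        apply Nat.mul_le_mul_left
        rw [← Finset.card_univ]
        exact Finset.card_filter_le _ _
    _ < 2 * G.edgeFinset.card := hE
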